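/- Let N ∈ M_{n-1}(ℝ) be a nilsoliton (nilpotent with [N,[N,Nᵀ]] = cN for some c ∈ ℝ) and C a nonzero skew-symmetric matrix with [N,C] = 0. Then A = N + C satisfies the criticality equation c₂(A)[A,Aᵀ] = 2c₃(A)[Aᵀ,[A,[A,Aᵀ]]], and F(A) = F(N). -/

import Mathlib

open Matrix

/-- Symmetric part `S(A) = (A + Aᵀ)/2`. -/
noncomputable def Ssym {m : ℕ} (A : Matrix (Fin m) (Fin m) ℝ) : Matrix (Fin m) (Fin m) ℝ :=
  (1 / 2 : ℝ) • (A + Aᵀ)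

/-- Commutator of matrices. -/
def brk {m : ℕ} (X Y : Matrix (Fin m) (Fin m) ℝ) : Matrix (Fin m) (Fin m) ℝ :=
  X * Y - Y * X

/-- Squared norm `|X|² = tr (X Xᵀ)`. -/
noncomputable def nsq {m : ℕ} (X : Matrix (Fin m) (Fin m) ℝ) : ℝ :=
  (X * Xᵀ).trace

/-- The Ricci pinching functional of the almost-abelian solvmanifold attached to `A`:
`F(A) = (tr S(A)² + (tr A)²)² / (tr S(A)² (tr S(A)² + (tr A)²) + ¼|[A,Aᵀ]|²)`. -/
noncomputable def Fpinch {m : ℕ} (A : Matrix (Fin m) (Fin m) ℝ) : ℝ :=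
  ((Ssym A * Ssym A).trace + A.trace ^ 2) ^ 2 /
    ((Ssym A * Ssym A).trace * ((Ssym A * Ssym A).trace + A.trace ^ 2)
      + (1 / 4) * nsq (brk A Aᵀ))

/-- Coefficient `c₂(A) = (tr S(A)²+(tr A)²)(−2(tr A)²(tr S(A)²+(tr A)²)+|[A,Aᵀ]|²)`. -/
noncomputable def c2 {m : ℕ} (A : Matrix (Fin m) (Fin m) ℝ) : ℝ :=
  ((Ssym A * Ssym A).trace + A.trace ^ 2) *
    (-2 * A.trace ^ 2 * ((Ssym A * Ssym A).trace + A.trace ^ 2) + nsq (brk A Aᵀ))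

/-- Coefficient `c₃(A) = (tr S(A)²+(tr A)²)²`. -/
noncomputable def c3 {m : ℕ} (A : Matrix (Fin m) (Fin m) ℝ) : ℝ :=
  ((Ssym A * Ssym A).trace + A.trace ^ 2) ^ 2

/-- Let `N` be a nilsoliton (nilpotent with `[N,[N,Nᵀ]] = cN`) and `C` a
nonzero skew-symmetric matrix commuting with `N`. Then `A = N + C` satisfies the criticality
equation `c₂(A)[A,Aᵀ] = 2c₃(A)[Aᵀ,[A,[A,Aᵀ]]]`, and `F(A) = F(N)`. -/
theorem stmt_14 (m : ℕ) (N C : Matrix (Fin m) (Fin m) ℝ)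
    (hN : IsNilpotent N) (c : ℝ) (hsol : brk N (brk N Nᵀ) = c • N)
    (hC : C ≠ 0) (hskew : Cᵀ = -C) (hcomm : N * C = C * N) :
    c2 (N + C) • brk (N + C) (N + C)ᵀ =
        (2 * c3 (N + C)) • brk (N + C)ᵀ (brk (N + C) (brk (N + C) (N + C)ᵀ)) ∧
    Fpinch (N + C) = Fpinch N := by
  -- basic commutation facts
  have hcomm' : Nᵀ * C = C * Nᵀ := by
    have h := congrArg Matrix.transpose hcomm
    simp only [Matrix.transpose_mul, hskew, Matrix.neg_mul, Matrix.mul_neg,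
      neg_inj] at h
    exact h.symm
  -- traces
  have htrC : C.trace = 0 := by
    have h := congrArg Matrix.trace hskew
    simp only [Matrix.trace_transpose, Matrix.trace_neg] at h
    linarith
  have htrN : N.trace = 0 := (Matrix.isNilpotent_trace_of_isNilpotent hN).eq_zero
  have htrN2 : (N * N).trace = 0 := by
    have h2 : IsNilpotent (N * N) := (Commute.refl N).isNilpotent_mul_left hN
    exact (Matrix.isNilpotent_trace_of_isNilpotent h2).eq_zero
  -- structural identities for A = N + C
  have hS : Ssym (N + C) = Ssym N := by
    unfold Ssym
    rw [Matrix.transpose_add, hskew]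
    congr 1
    abel
  have htrA : (N + C).trace = N.trace := by
    rw [Matrix.trace_add, htrC, add_zero]
  have hB : brk (N + C) (N + C)ᵀ = brk N Nᵀ := by
    unfold brk
    rw [Matrix.transpose_add, hskew]
    simp only [Matrix.add_mul, Matrix.mul_add, Matrix.mul_neg, Matrix.neg_mul,
      hcomm, hcomm']
    abel
  -- C commutes with [N, Nᵀ]
  have hc1 : C * (N * Nᵀ) = N * Nᵀ * C := by
    rw [← Matrix.mul_assoc, ← hcomm, Matrix.mul_assoc, ← hcomm', ← Matrix.mul_assoc]
  have hc2' : C * (Nᵀ * N) = Nᵀ * N * C := by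
    rw [← Matrix.mul_assoc, ← hcomm', Matrix.mul_assoc, ← hcomm, ← Matrix.mul_assoc]
  have hCB : C * (N * Nᵀ - Nᵀ * N) = (N * Nᵀ - Nᵀ * N) * C := by
    rw [Matrix.mul_sub, Matrix.sub_mul, hc1, hc2']
  have hinner : brk (N + C) (brk (N + C) (N + C)ᵀ) = c • N := by
    rw [hB, ← hsol]
    unfold brk
    rw [Matrix.add_mul, Matrix.mul_add, hCB]
    abel
  have houter : brk (N + C)ᵀ (brk (N + C) (brk (N + C) (N + C)ᵀ))
      = c • (Nᵀ * N - N * Nᵀ) := by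
    rw [hinner]
    unfold brk
    rw [Matrix.transpose_add, hskew, Matrix.mul_smul, Matrix.smul_mul, ← smul_sub]
    congr 1
    rw [Matrix.add_mul, Matrix.mul_add, Matrix.neg_mul, Matrix.mul_neg, hcomm]
    abel
  -- scalar identities
  set t : ℝ := (N * Nᵀ).trace with ht
  have hT : (Ssym N * Ssym N).trace = t / 2 := by
    unfold Ssym
    rw [Matrix.smul_mul, Matrix.mul_smul, smul_smul, Matrix.add_mul,
      Matrix.mul_add, Matrix.mul_add]
    rw [Matrix.trace_smul]
    have h1 : (Nᵀ * Nᵀ).trace = 0 := by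
      rw [← Matrix.transpose_mul, Matrix.trace_transpose, htrN2]
    have h2 : (Nᵀ * N).trace = (N * Nᵀ).trace := Matrix.trace_mul_comm _ _
    simp only [Matrix.trace_add, htrN2, h1, h2, smul_eq_mul]
    ring_nf
    rw [ht]
  -- nsq of the bracket
  have hBT : (brk N Nᵀ)ᵀ = brk N Nᵀ := by
    unfold brk
    rw [Matrix.transpose_sub, Matrix.transpose_mul, Matrix.transpose_mul,
      Matrix.transpose_transpose]
  have hnsq : nsq (brk N Nᵀ) = -(c * t) := by
    have h := congrArg (fun X => (X * Nᵀ).trace) hsol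
    simp only [Matrix.smul_mul, Matrix.trace_smul, smul_eq_mul] at h
    unfold brk at h
    unfold nsq
    rw [hBT]
    unfold brk
    have e1 : (N * (N * (Nᵀ * Nᵀ))).trace = (N * (Nᵀ * (Nᵀ * N))).trace := by
      rw [Matrix.trace_mul_comm]
      simp only [Matrix.mul_assoc]
    have e2 : (Nᵀ * (N * (N * Nᵀ))).trace = (N * (N * (Nᵀ * Nᵀ))).trace := by
      rw [Matrix.trace_mul_comm]
      simp only [Matrix.mul_assoc]
    have e3 : (Nᵀ * (N * (Nᵀ * N))).trace = (N * (Nᵀ * (N * Nᵀ))).trace := by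
      rw [Matrix.trace_mul_comm]
      simp only [Matrix.mul_assoc]
    simp only [Matrix.sub_mul, Matrix.mul_sub, Matrix.trace_sub,
      Matrix.mul_assoc] at h ⊢
    rw [← ht] at h
    linarith [e1, e2, e3]
  -- the scalar equality
  have hc2eq : c2 (N + C) = -(2 * c3 (N + C)) * c := by
    unfold c2 c3
    rw [hS, htrA, htrN, hB, hnsq, hT]
    ring
  constructor
  · rw [houter, hB, hc2eq, smul_smul, neg_mul, neg_smul, ← smul_neg]
    congr 1
    unfold brk
    rw [neg_sub]
  · unfold Fpinch
    rw [hS, htrA, hB]
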